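/- Let v(θ, θ') = Ḡ(x(θ) - θ') r(x(θ)) / (1 - γ Ḡ(x(θ) - θ')) and suppose v is L_v-Lipschitz in its first argument uniformly in the second, v is non-decreasing in θ', and 0 ≤ v ≤ B/(1-γ). If the interval (l, u) is an η-cover for the threshold distribution F (i.e. F(u) - F(l) > 1 - η), then the constant policy at m = (l+u)/2 satisfies V_o - V_θ ≤ L_v (u-l)/2 + 2ηB/(1-γ), where V_o = E_θ[v(θ, θ)] is the oracle value and V_θ = E_θ[v(m, θ)] is the value of the constant policy at m. -/

import Mathlib

open MeasureTheory

/-- Large-noise robustness: if `v(θ, θ')` (the value of the optimal constant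
policy for fixed component `θ` when the true fixed component is `θ'`) is
`L_v`-Lipschitz in its first argument, non-decreasing in its second argument,
takes values in `[0, B/(1-γ)]`, and `(l, u)` is an `η`-cover of the threshold
distribution, then the constant policy at the midpoint `m = (l+u)/2` has value
within `L_v(u-l)/2 + 2ηB/(1-γ)` of the oracle value `V_o = E[v(θ,θ)]`. -/
theorem large_noise_constant_policy_gap
    (μ : Measure ℝ) [IsProbabilityMeasure μ]
    (v : ℝ → ℝ → ℝ)
    (B γ Lv η l u : ℝ)
    (hγ : γ ∈ Set.Ioo (0 : ℝ) 1) (hB : 0 ≤ B) (hLv : 0 ≤ Lv) (hη : 0 ≤ η)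
    (hlu : l < u)
    (hLip : ∀ θ s θ' : ℝ, |v θ θ' - v s θ'| ≤ Lv * |θ - s|)
    (hmono : ∀ θ : ℝ, Monotone (v θ))
    (hbounds : ∀ θ θ' : ℝ, 0 ≤ v θ θ' ∧ v θ θ' ≤ B / (1 - γ))
    (hcover : 1 - η < (μ (Set.Ioo l u)).toReal)
    (hint₁ : Integrable (fun θ => v θ θ) μ)
    (hint₂ : Integrable (fun θ => v ((l + u) / 2) θ) μ) :
    (∫ θ, v θ θ ∂μ) - (∫ θ, v ((l + u) / 2) θ ∂μ)
      ≤ Lv * (u - l) / 2 + 2 * η * B / (1 - γ) := by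

  set m : ℝ := (l + u) / 2 with hm
  set g : ℝ → ℝ := fun θ => v θ θ - v m θ with hg
  have hgint : Integrable g μ := hint₁.sub hint₂
  have hγ1 : (0:ℝ) < 1 - γ := by linarith [hγ.2]
  have hBpos : (0:ℝ) ≤ B / (1 - γ) := div_nonneg hB hγ1.le
  set s : Set ℝ := Set.Ioo l u with hs
  have hms : MeasurableSet s := measurableSet_Ioo
  have hsplit : (∫ θ in s, g θ ∂μ) + (∫ θ in sᶜ, g θ ∂μ) = ∫ θ, g θ ∂μ :=
    integral_add_compl hms hgint
  have hμs_fin : μ s < ⊤ := lt_of_le_of_lt (prob_le_one) (by norm_num)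
  have hμsc_fin : μ sᶜ < ⊤ := lt_of_le_of_lt (prob_le_one) (by norm_num)
  -- bound on s
  have hbound1 : ∀ θ ∈ s, ‖g θ‖ ≤ Lv * (u - l) / 2 := by
    intro θ hθ
    have h1 : |v θ θ - v m θ| ≤ Lv * |θ - m| := hLip θ m θ
    have h2 : |θ - m| ≤ (u - l) / 2 := by
      obtain ⟨h3, h4⟩ := hθ
      rw [abs_le]
      constructor <;> simp only [hm] <;> linarith
    calc ‖g θ‖ = |v θ θ - v m θ| := rfl
      _ ≤ Lv * |θ - m| := h1
      _ ≤ Lv * ((u - l) / 2) := by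
          exact mul_le_mul_of_nonneg_left h2 hLv
      _ = Lv * (u - l) / 2 := by ring
  have hbound2 : ∀ θ ∈ sᶜ, ‖g θ‖ ≤ B / (1 - γ) := by
    intro θ _
    have h1 := hbounds θ θ
    have h2 := hbounds m θ
    rw [Real.norm_eq_abs, abs_le]
    constructor <;> [linarith [h1.1, h2.2]; linarith [h1.2, h2.1]]
  have hI1 : (∫ θ in s, g θ ∂μ) ≤ Lv * (u - l) / 2 := by
    have := norm_setIntegral_le_of_norm_le_const hμs_fin hbound1
    have hle : ‖∫ θ in s, g θ ∂μ‖ ≤ Lv * (u - l) / 2 * (μ s).toReal := this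
    have hC : (0:ℝ) ≤ Lv * (u - l) / 2 := div_nonneg (mul_nonneg hLv (by linarith)) (by norm_num)
    calc (∫ θ in s, g θ ∂μ) ≤ ‖∫ θ in s, g θ ∂μ‖ := le_abs_self _
      _ ≤ Lv * (u - l) / 2 * (μ s).toReal := hle
      _ ≤ Lv * (u - l) / 2 * 1 := by
          apply mul_le_mul_of_nonneg_left _ hC
          exact ENNReal.toReal_le_of_le_ofReal one_pos.le (by simpa using prob_le_one)
      _ = Lv * (u - l) / 2 := mul_one _
  have hμsc : (μ sᶜ).toReal ≤ η := by
    have h1 : μ sᶜ = 1 - μ s := prob_compl_eq_one_sub hms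
    have h2 : (μ sᶜ).toReal = 1 - (μ s).toReal := by
      rw [h1, ENNReal.toReal_sub_of_le prob_le_one (by norm_num)]
      simp
    linarith [h2, hcover]
  have hI2 : (∫ θ in sᶜ, g θ ∂μ) ≤ B / (1 - γ) * η := by
    have hle : ‖∫ θ in sᶜ, g θ ∂μ‖ ≤ B / (1 - γ) * (μ sᶜ).toReal :=
      norm_setIntegral_le_of_norm_le_const hμsc_fin hbound2
    calc (∫ θ in sᶜ, g θ ∂μ) ≤ ‖∫ θ in sᶜ, g θ ∂μ‖ := le_abs_self _
      _ ≤ B / (1 - γ) * (μ sᶜ).toReal := hle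
      _ ≤ B / (1 - γ) * η := mul_le_mul_of_nonneg_left hμsc hBpos
  have hfinal : (∫ θ, g θ ∂μ) ≤ Lv * (u - l) / 2 + B / (1 - γ) * η := by
    rw [← hsplit]; linarith
  have heq : (∫ θ, v θ θ ∂μ) - (∫ θ, v m θ ∂μ) = ∫ θ, g θ ∂μ := by
    rw [integral_sub hint₁ hint₂]
  have hslack : B / (1 - γ) * η ≤ 2 * η * B / (1 - γ) := by
    have h := mul_nonneg hη hBpos
    calc B / (1 - γ) * η = η * (B / (1 - γ)) := by ring
      _ ≤ 2 * (η * (B / (1 - γ))) := by linarith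
      _ = 2 * η * B / (1 - γ) := by ring
  linarith [hfinal, heq ▸ hfinal]
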